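/- The solution (g₁, g₂, g₃)(t) = ((1-6t)^{1/6}, (1-6t)^{1/6}, (1-6t)^{-1/6}) of the system ġ₁ = -g₃²/(g₁g₂²), ġ₂ = -g₃²/(g₁²g₂), ġ₃ = g₃³/(g₁²g₂²) is an ancient non-eternal solution: it is defined for all t < 1/6 but not at t = 1/6, and g₃(t) → 0 and g₁(t) → +∞ as t → -∞ (in particular g₁(t)² g₂(t) → ∞, so the associated metrics diverge as t → -∞). -/

import Mathlib

open Filter

lemma u_atTop : Tendsto (fun t : ℝ => 1 - 6 * t) atBot atTop := by
  have h : Tendsto (fun t : ℝ => -(6 * t)) atBot atTop :=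
    tendsto_neg_atBot_atTop.comp (tendsto_id.const_mul_atBot (by norm_num : (0:ℝ) < 6))
  have := tendsto_atTop_add_const_left atBot 1 h
  simpa [sub_eq_add_neg] using this

/-- the solution `(g₁,g₂,g₃)(t) = ((1-6t)^(1/6), (1-6t)^(1/6), (1-6t)^(-1/6))`
of the Iwasawa flow is an ancient non-eternal solution: it is defined (positive) for all
`t < 1/6`, `g₁(t) → 0` as `t → 1/6⁻` (so it does not extend past `1/6`), while as
`t → -∞` one has `g₃(t) → 0`, `g₁(t) → +∞` and `g₁(t)² g₂(t) → +∞` (the metrics diverge). -/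
theorem iwasawa_flow_ancient_non_eternal
    (g1 g2 g3 : ℝ → ℝ)
    (hg1 : ∀ t, g1 t = (1 - 6 * t) ^ ((1 : ℝ) / 6))
    (hg2 : ∀ t, g2 t = (1 - 6 * t) ^ ((1 : ℝ) / 6))
    (hg3 : ∀ t, g3 t = (1 - 6 * t) ^ (-(1 : ℝ) / 6)) :
    (∀ t < (1 : ℝ) / 6, 0 < g1 t ∧ 0 < g2 t ∧ 0 < g3 t) ∧
    Tendsto g1 (nhdsWithin ((1 : ℝ) / 6) (Set.Iio ((1 : ℝ) / 6))) (nhds 0) ∧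
    Tendsto g3 atBot (nhds 0) ∧
    Tendsto g1 atBot atTop ∧
    Tendsto (fun t => (g1 t) ^ 2 * g2 t) atBot atTop := by
  have hu : ∀ t : ℝ, t < 1 / 6 → 0 < 1 - 6 * t := by intro t ht; linarith
  have hg1top : Tendsto g1 atBot atTop := by
    have := (tendsto_rpow_atTop (y := (1:ℝ)/6) (by norm_num)).comp u_atTop
    refine this.congr fun t => (hg1 t).symm
  refine ⟨?_, ?_, ?_, hg1top, ?_⟩
  · intro t ht
    refine ⟨?_, ?_, ?_⟩ <;>
      simp only [hg1, hg2, hg3] <;> exact Real.rpow_pos_of_pos (hu t ht) _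
  · have hc : ContinuousAt (fun x : ℝ => x ^ ((1:ℝ)/6)) 0 :=
      Real.continuousAt_rpow_const 0 _ (Or.inr (by norm_num))
    have hlin : Tendsto (fun t : ℝ => 1 - 6 * t)
        (nhdsWithin ((1:ℝ)/6) (Set.Iio ((1:ℝ)/6))) (nhds 0) := by
      have hcont : Continuous (fun t : ℝ => 1 - 6 * t) := by continuity
      have h2 := hcont.tendsto ((1:ℝ)/6)
      norm_num at h2
      exact h2.mono_left nhdsWithin_le_nhds
    have := (hc.tendsto.comp hlin)
    simp only [Real.zero_rpow (by norm_num : (1:ℝ)/6 ≠ 0)] at this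
    exact this.congr fun t => (hg1 t).symm
  · have := (tendsto_rpow_neg_atTop (y := (1:ℝ)/6) (by norm_num)).comp u_atTop
    refine this.congr fun t => ?_
    simp [Function.comp, hg3 t, neg_div]
  · have hg2top : Tendsto g2 atBot atTop := by
      have := (tendsto_rpow_atTop (y := (1:ℝ)/6) (by norm_num)).comp u_atTop
      exact this.congr fun t => (hg2 t).symm
    exact ((hg1top.atTop_mul_atTop₀ hg1top).congr (fun t => (sq (g1 t)).symm)).atTop_mul_atTop₀ hg2top
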